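/- (Basis exchange property.) For any two bases B₁, B₂ of a matroid on a finite ground set, and for any integer h with 1 ≤ h ≤ |B₁|, there exists a bijection σ from the size-h subsets of B₁ to the size-h subsets of B₂ such that for every subset H ⊆ B₁ with |H| = h, the set (B₂ \ σ(H)) ∪ H is a basis of the matroid. -/

import Mathlib

open Finset

/-- A matroid given by a (finite, nonempty, downward-closed) family of independent sets
satisfying the exchange property. -/
def IsMatroid {α : Type*} [DecidableEq α] (I : Finset (Finset α)) : Prop :=
  I.Nonempty ∧ (∀ A ∈ I, ∀ B ⊆ A, B ∈ I) ∧
    (∀ A ∈ I, ∀ B ∈ I, A.card < B.card → ∃ e ∈ B \ A, insert e A ∈ I)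

/-- A basis of a matroid is a maximal independent set. -/
def IsBasis {α : Type*} [DecidableEq α] (I : Finset (Finset α)) (B : Finset α) : Prop :=
  B ∈ I ∧ ∀ A ∈ I, B ⊆ A → A = B

section Greene
variable {α : Type*} [DecidableEq α] {𝓘 : Finset (Finset α)}



lemma indep_card_le (hM : IsMatroid 𝓘) {A B : Finset α} (hA : A ∈ 𝓘) (hB : IsBasis 𝓘 B) :
    A.card ≤ B.card := by
  by_contra hlt
  push_neg at hlt
  obtain ⟨e, he, hins⟩ := hM.2.2 B hB.1 A hA hlt
  have heq := hB.2 _ hins (subset_insert _ _)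
  rw [mem_sdiff] at he
  exact he.2 (by rw [← heq]; exact mem_insert_self _ _)

lemma basis_card_eq (hM : IsMatroid 𝓘) {B B' : Finset α} (hB : IsBasis 𝓘 B)
    (hB' : IsBasis 𝓘 B') : B.card = B'.card :=
  le_antisymm (indep_card_le hM hB.1 hB') (indep_card_le hM hB'.1 hB)

lemma basis_of_indep_card (hM : IsMatroid 𝓘) {A B : Finset α} (hA : A ∈ 𝓘)
    (hB : IsBasis 𝓘 B) (hcard : B.card ≤ A.card) : IsBasis 𝓘 A := by
  refine ⟨hA, fun A' hA' hsub => ?_⟩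
  exact (Finset.eq_of_subset_of_card_le hsub
    (le_trans (indep_card_le hM hA' hB) hcard)).symm

lemma exists_basis_between (hM : IsMatroid 𝓘) {B : Finset α} (hB : IsBasis 𝓘 B) :
    ∀ n A, A ∈ 𝓘 → B.card - A.card ≤ n → ∃ C, IsBasis 𝓘 C ∧ A ⊆ C ∧ C ⊆ A ∪ B := by
  intro n
  induction n with
  | zero =>
    intro A hA hn
    exact ⟨A, basis_of_indep_card hM hA hB (by omega), subset_refl _, subset_union_left⟩
  | succ n ih =>
    intro A hA hn
    by_cases hcard : B.card ≤ A.card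
    · exact ⟨A, basis_of_indep_card hM hA hB hcard, subset_refl _, subset_union_left⟩
    · push_neg at hcard
      obtain ⟨e, he, hins⟩ := hM.2.2 A hA B hB.1 hcard
      rw [mem_sdiff] at he
      obtain ⟨C, hC, hsub1, hsub2⟩ := ih (insert e A) hins
        (by rw [card_insert_of_notMem he.2]; omega)
      refine ⟨C, hC, (subset_insert _ _).trans hsub1, hsub2.trans ?_⟩
      intro a ha
      rw [mem_union, mem_insert] at ha
      rcases ha with (rfl | ha) | ha
      · exact mem_union_right _ he.1
      · exact mem_union_left _ ha
      · exact mem_union_right _ ha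


/-- Brualdi's bijective exchange for single elements. -/
lemma brualdi (hM : IsMatroid 𝓘) {B B' : Finset α} (hB : IsBasis 𝓘 B) (hB' : IsBasis 𝓘 B') :
    ∃ π : α → α, Set.InjOn π ↑B ∧
      ∀ x ∈ B, π x ∈ B' ∧ IsBasis 𝓘 (insert (π x) (B.erase x)) := by
  classical
  set T : {x // x ∈ B} → Finset α :=
    fun z => B'.filter (fun w => IsBasis 𝓘 (insert w (B.erase z.val))) with hT
  have hall : ∀ s : Finset {x // x ∈ B}, s.card ≤ (s.biUnion T).card := by
    intro s
    set S : Finset α := s.image (·.val) with hS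
    set N : Finset α := s.biUnion T with hN
    have hSB : S ⊆ B := by
      intro a ha
      rw [hS, mem_image] at ha
      obtain ⟨z, _, rfl⟩ := ha
      exact z.2
    have hNB' : N ⊆ B' := by
      intro a ha
      rw [hN, mem_biUnion] at ha
      obtain ⟨z, _, ha⟩ := ha
      exact (mem_filter.mp ha).1
    have hScard : S.card = s.card := card_image_of_injective _ Subtype.val_injective
    -- membership in N from a witnessing basis
    have hmemN : ∀ e ∈ B', ∀ z ∈ S, IsBasis 𝓘 (insert e (B.erase z)) → e ∈ N := by
      intro e he z hz hbas
      rw [hS, mem_image] at hz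
      obtain ⟨u, hu, rfl⟩ := hz
      rw [hN, mem_biUnion]
      exact ⟨u, hu, mem_filter.mpr ⟨he, hbas⟩⟩
    have hDind : B' \ N ∈ 𝓘 := hM.2.1 B' hB'.1 _ sdiff_subset
    have hBSind : B \ S ∈ 𝓘 := hM.2.1 B hB.1 _ sdiff_subset
    have hkey : (B' \ N).card ≤ (B \ S).card := by
      by_contra hlt
      push_neg at hlt
      obtain ⟨e, he, hins⟩ := hM.2.2 _ hBSind _ hDind hlt
      rw [mem_sdiff, mem_sdiff, mem_sdiff] at he
      obtain ⟨⟨heB', heN⟩, he2⟩ := he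
      by_cases heB : e ∈ B
      · have heS : e ∈ S := by
          by_contra h'
          exact he2 ⟨heB, h'⟩
        exact heN (hmemN e heB' e heS (by rw [insert_erase heB]; exact hB))
      · obtain ⟨C, hC, hsub1, hsub2⟩ :=
          exists_basis_between hM hB B.card _ hins (Nat.sub_le _ _)
        have hCB : C ⊆ insert e B := by
          intro a ha
          have := hsub2 ha
          rw [mem_union, mem_insert] at this
          rw [mem_insert]
          rcases this with (rfl | h') | h'
          · exact Or.inl rfl
          · exact Or.inr (mem_sdiff.mp h').1
          · exact Or.inr h'
        have hCcard : C.card = B.card := basis_card_eq hM hC hB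
        have : ∃ z ∈ B, z ∉ C := by
          by_contra h'
          push_neg at h'
          have : insert e B ⊆ C := by
            intro a ha
            rw [mem_insert] at ha
            rcases ha with rfl | ha
            · exact hsub1 (mem_insert_self _ _)
            · exact h' a ha
          have hle := card_le_card this
          rw [card_insert_of_notMem heB, hCcard] at hle
          omega
        obtain ⟨z, hzB, hzC⟩ := this
        have hzS : z ∈ S := by
          by_contra h'
          exact hzC (hsub1 (mem_insert_of_mem (mem_sdiff.mpr ⟨hzB, h'⟩)))
        have hCeq : C = insert e (B.erase z) := by
          apply Finset.eq_of_subset_of_card_le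
          · intro a ha
            rw [mem_insert, mem_erase]
            have := hCB ha
            rw [mem_insert] at this
            rcases this with rfl | h'
            · exact Or.inl rfl
            · exact Or.inr ⟨fun h'' => hzC (h'' ▸ ha), h'⟩
          · rw [card_insert_of_notMem (fun h' => heB (mem_of_mem_erase h')),
              card_erase_of_mem hzB, hCcard]
            have hBpos : 0 < B.card := card_pos.mpr ⟨z, hzB⟩
            omega
        exact heN (hmemN e heB' z hzS (hCeq ▸ hC))
    have h1 : (B' \ N).card = B'.card - N.card := card_sdiff_of_subset hNB'
    have h2 : (B \ S).card = B.card - S.card := card_sdiff_of_subset hSB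
    have h3 : B.card = B'.card := basis_card_eq hM hB hB'
    have h4 : N.card ≤ B'.card := card_le_card hNB'
    have h5 : S.card ≤ B.card := card_le_card hSB
    omega
  obtain ⟨f, hfinj, hf⟩ := (Finset.all_card_le_biUnion_card_iff_exists_injective T).mp hall
  refine ⟨fun x => if hx : x ∈ B then f ⟨x, hx⟩ else x, ?_, ?_⟩
  · intro x hx y hy hxy
    simp only [Finset.mem_coe] at hx hy
    dsimp only at hxy
    rw [dif_pos hx, dif_pos hy] at hxy
    exact congrArg Subtype.val (hfinj hxy)
  · intro x hx
    have := hf ⟨x, hx⟩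
    rw [hT, mem_filter] at this
    dsimp only
    rw [dif_pos hx]
    exact this


lemma exchange_set_identity {B₂ K H : Finset α} {x y : α} (hy : y ∈ B₂)
    (hx : ¬ (x ∈ B₂ ∧ x ∉ K)) :
    insert y (((B₂ \ K) ∪ H).erase x) = (B₂ \ K.erase y) ∪ H.erase x := by
  ext a
  simp only [mem_insert, mem_erase, mem_union, mem_sdiff]
  constructor
  · rintro (rfl | ⟨hax, (⟨h1, h2⟩ | h3)⟩)
    · exact Or.inl ⟨hy, fun hc => hc.1 rfl⟩
    · exact Or.inl ⟨h1, fun hc => h2 hc.2⟩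
    · exact Or.inr ⟨hax, h3⟩
  · rintro (⟨h1, h2⟩ | ⟨hax, h3⟩)
    · by_cases hay : a = y
      · exact Or.inl hay
      · have haK : a ∉ K := fun hc => h2 ⟨hay, hc⟩
        exact Or.inr ⟨fun hc => hx (hc ▸ ⟨h1, haK⟩), Or.inl ⟨h1, haK⟩⟩
    · exact Or.inr ⟨hax, Or.inr h3⟩

lemma greene_aux (hM : IsMatroid 𝓘) {B₁ B₂ : Finset α} (hB₁ : IsBasis 𝓘 B₁)
    (hB₂ : IsBasis 𝓘 B₂) :
    ∀ t k, k + t = B₁.card →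
      ∃ σ : Finset α → Finset α,
        Set.BijOn σ (B₁.powersetCard k : Set (Finset α))
          (B₂.powersetCard k : Set (Finset α)) ∧
        ∀ H ∈ B₁.powersetCard k, IsBasis 𝓘 ((B₂ \ σ H) ∪ H) := by
  classical
  have hc12 : B₁.card = B₂.card := basis_card_eq hM hB₁ hB₂
  intro t
  induction t with
  | zero =>
    intro k hk
    obtain rfl : k = B₁.card := by omega
    have e1 : B₁.powersetCard B₁.card = {B₁} := powersetCard_self B₁
    have e2 : B₂.powersetCard B₁.card = {B₂} := by rw [hc12]; exact powersetCard_self B₂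
    refine ⟨fun _ => B₂, ?_, ?_⟩
    · rw [e1, e2, coe_singleton, coe_singleton]
      exact Set.bijOn_singleton.mpr rfl
    · intro H hH
      rw [e1, mem_singleton] at hH
      have hrw : B₂ \ B₂ ∪ H = H := by simp
      rw [hrw, hH]
      exact hB₁
  | succ t ih =>
    intro k hk
    obtain ⟨f, hfbij, hfbas⟩ := ih (k + 1) (by omega)
    have hk1n : k + 1 ≤ B₁.card := by omega
    have hfQ1 : ∀ H ∈ B₁.powersetCard (k + 1), f H ∈ B₂.powersetCard (k + 1) :=
      fun H hH => Finset.mem_coe.mp (hfbij.mapsTo (Finset.mem_coe.mpr hH))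
    -- choose the Brualdi injections
    have hchoice : ∀ H : Finset α, ∃ π : α → α, H ∈ B₁.powersetCard (k + 1) →
        (Set.InjOn π ↑((B₂ \ f H) ∪ H) ∧ ∀ x ∈ (B₂ \ f H) ∪ H,
          π x ∈ B₂ ∧ IsBasis 𝓘 (insert (π x) (((B₂ \ f H) ∪ H).erase x))) := by
      intro H
      by_cases hH : H ∈ B₁.powersetCard (k + 1)
      · obtain ⟨π, h1, h2⟩ := brualdi hM (hfbas H hH) hB₂
        exact ⟨π, fun _ => ⟨h1, h2⟩⟩
      · exact ⟨id, fun h' => absurd h' hH⟩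
    choose π hπ using hchoice
    -- the key projection step
    have key : ∀ H ∈ B₁.powersetCard (k + 1), ∀ x ∈ H,
        π H x ∈ f H ∧ (f H).erase (π H x) ∈ B₂.powersetCard k ∧
        IsBasis 𝓘 ((B₂ \ (f H).erase (π H x)) ∪ H.erase x) := by
      intro H hH x hx
      obtain ⟨hπinj, hπx⟩ := hπ H hH
      obtain ⟨hKsub, hKcard⟩ := mem_powersetCard.mp (hfQ1 H hH)
      obtain ⟨hHsub, hHcard⟩ := mem_powersetCard.mp hH
      have hBbas : IsBasis 𝓘 ((B₂ \ f H) ∪ H) := hfbas H hH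
      have hBcard : ((B₂ \ f H) ∪ H).card = B₂.card := basis_card_eq hM hBbas hB₂
      have hsdcard : (B₂ \ f H).card = B₂.card - (k + 1) := by
        rw [card_sdiff_of_subset hKsub, hKcard]
      have hdisj : (B₂ \ f H) ∩ H = ∅ := by
        have hci := card_union_add_card_inter (B₂ \ f H) H
        have : ((B₂ \ f H) ∩ H).card = 0 := by omega
        exact card_eq_zero.mp this
      have hxB : x ∈ (B₂ \ f H) ∪ H := mem_union_right _ hx
      obtain ⟨hyB₂, hCbas⟩ := hπx x hxB
      have hxnotsd : ¬ (x ∈ B₂ ∧ x ∉ f H) := by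
        intro hc
        have : x ∈ (B₂ \ f H) ∩ H := mem_inter.mpr ⟨mem_sdiff.mpr hc, hx⟩
        rw [hdisj] at this
        exact notMem_empty _ this
      have hynotE : π H x ∉ ((B₂ \ f H) ∪ H).erase x := by
        intro hc
        have he : insert (π H x) (((B₂ \ f H) ∪ H).erase x) = ((B₂ \ f H) ∪ H).erase x :=
          insert_eq_self.mpr hc
        rw [he] at hCbas
        have hcc := basis_card_eq hM hCbas hB₂
        rw [card_erase_of_mem hxB] at hcc
        have hpos : 0 < ((B₂ \ f H) ∪ H).card := card_pos.mpr ⟨x, hxB⟩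
        omega
      have hyK : π H x ∈ f H := by
        by_cases hxy : π H x = x
        · by_contra hc
          exact hxnotsd ⟨hxy ▸ hyB₂, hxy ▸ hc⟩
        · have hynotB : π H x ∉ (B₂ \ f H) ∪ H := fun hc =>
            hynotE (mem_erase.mpr ⟨hxy, hc⟩)
          by_contra hc
          exact hynotB (mem_union_left _ (mem_sdiff.mpr ⟨hyB₂, hc⟩))
      have hid := exchange_set_identity (H := H) hyB₂ hxnotsd
      rw [hid] at hCbas
      refine ⟨hyK, mem_powersetCard.mpr ⟨(erase_subset _ _).trans hKsub, ?_⟩, hCbas⟩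
      rw [card_erase_of_mem hyK, hKcard]
      omega
    -- Hall's condition at level k
    set T : {H' // H' ∈ B₁.powersetCard k} → Finset (Finset α) :=
      fun H' => (B₂.powersetCard k).filter
        (fun K' => IsBasis 𝓘 ((B₂ \ K') ∪ H'.val)) with hT
    have hall : ∀ s : Finset {H' // H' ∈ B₁.powersetCard k},
        s.card ≤ (s.biUnion T).card := by
      intro s
      set 𝓢 : Finset (Finset α) := s.image (·.val) with h𝓢
      have h𝓢card : 𝓢.card = s.card := card_image_of_injective _ Subtype.val_injective
      have h𝓢P0 : ∀ H' ∈ 𝓢, H' ⊆ B₁ ∧ H'.card = k := by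
        intro H' hH'
        rw [h𝓢, mem_image] at hH'
        obtain ⟨u, _, rfl⟩ := hH'
        exact mem_powersetCard.mp u.2
      set Ω : Finset (Finset α × α) :=
        𝓢.biUnion (fun H' => (B₁ \ H').image (fun x => (insert x H', x))) with hΩ
      have hΩmem : ∀ p ∈ Ω, p.1 ∈ B₁.powersetCard (k + 1) ∧ p.2 ∈ p.1 ∧
          p.1.erase p.2 ∈ 𝓢 := by
        intro p hp
        rw [hΩ, mem_biUnion] at hp
        obtain ⟨H', hH', hp⟩ := hp
        rw [mem_image] at hp
        obtain ⟨x, hxmem, rfl⟩ := hp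
        rw [mem_sdiff] at hxmem
        obtain ⟨hsub, hcard⟩ := h𝓢P0 H' hH'
        refine ⟨mem_powersetCard.mpr ⟨insert_subset hxmem.1 hsub, ?_⟩,
          mem_insert_self _ _, by rw [erase_insert hxmem.2]; exact hH'⟩
        rw [card_insert_of_notMem hxmem.2, hcard]
      have hΩcard : Ω.card = 𝓢.card * (B₁.card - k) := by
        rw [hΩ, card_biUnion]
        · have hterm : ∀ H' ∈ 𝓢,
              ((B₁ \ H').image (fun x => (insert x H', x))).card = B₁.card - k := by
            intro H' hH'
            rw [card_image_of_injective _
              (fun a b hab => by simpa using congrArg Prod.snd hab)]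
            obtain ⟨hsub, hcard⟩ := h𝓢P0 H' hH'
            rw [card_sdiff_of_subset hsub, hcard]
          rw [Finset.sum_congr rfl hterm, Finset.sum_const, smul_eq_mul]
        · intro H1 h1 H2 h2 hne
          rw [Function.onFun, disjoint_left]
          intro p hp1 hp2
          rw [mem_image] at hp1 hp2
          obtain ⟨x1, hx1, he1⟩ := hp1
          obtain ⟨x2, hx2, he2⟩ := hp2
          rw [mem_sdiff] at hx1 hx2
          have hx12 : x1 = x2 := by
            have := congrArg Prod.snd (he1.trans he2.symm)
            simpa using this
          subst hx12
          have : insert x1 H1 = insert x1 H2 := by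
            have := congrArg Prod.fst (he1.trans he2.symm)
            simpa using this
          apply hne
          rw [← erase_insert hx1.2, ← erase_insert hx2.2, this]
      set β : Finset α × α → Finset α := fun p => (f p.1).erase (π p.1 p.2) with hβ
      have hβmem : ∀ p ∈ Ω, β p ∈ s.biUnion T ∧ β p ∈ B₂.powersetCard k := by
        intro p hp
        obtain ⟨hp1, hp2, hp3⟩ := hΩmem p hp
        obtain ⟨hK, hQ0, hbas⟩ := key p.1 hp1 p.2 hp2
        rw [h𝓢, mem_image] at hp3
        obtain ⟨u, hu, huval⟩ := hp3
        refine ⟨mem_biUnion.mpr ⟨u, hu, ?_⟩, hQ0⟩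
        rw [hT]
        exact mem_filter.mpr ⟨hQ0, by rw [huval]; exact hbas⟩
      have hfiber : ∀ K' ∈ Ω.image β,
          (Ω.filter (fun p => β p = K')).card ≤ B₁.card - k := by
        intro K' hK'
        obtain ⟨p0, hp0, hp0eq⟩ := mem_image.mp hK'
        have hK'Q0 : K' ∈ B₂.powersetCard k := hp0eq ▸ (hβmem p0 hp0).2
        obtain ⟨hK'sub, hK'card⟩ := mem_powersetCard.mp hK'Q0
        have hle : (Ω.filter (fun p => β p = K')).card ≤ (B₂ \ K').card := by
          apply card_le_card_of_injOn (fun p => π p.1 p.2)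
          · intro p hp
            rw [mem_coe, mem_filter] at hp
            obtain ⟨hpΩ, hpβ⟩ := hp
            obtain ⟨hp1, hp2, _⟩ := hΩmem p hpΩ
            obtain ⟨hK, _, _⟩ := key p.1 hp1 p.2 hp2
            have hsubB₂ : f p.1 ⊆ B₂ := (mem_powersetCard.mp (hfQ1 _ hp1)).1
            show π p.1 p.2 ∈ B₂ \ K'
            rw [mem_sdiff]
            refine ⟨hsubB₂ hK, ?_⟩
            rw [← hpβ]
            simp only [hβ]
            exact notMem_erase _ _
          · intro p hp q hq hpq
            rw [mem_coe, mem_filter] at hp hq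
            obtain ⟨hpΩ, hpβ⟩ := hp
            obtain ⟨hqΩ, hqβ⟩ := hq
            obtain ⟨hp1, hp2, _⟩ := hΩmem p hpΩ
            obtain ⟨hq1, hq2, _⟩ := hΩmem q hqΩ
            obtain ⟨hKp, _, _⟩ := key p.1 hp1 p.2 hp2
            obtain ⟨hKq, _, _⟩ := key q.1 hq1 q.2 hq2
            dsimp only at hpq
            have hfpq : f p.1 = f q.1 := by
              have e1 : f p.1 = insert (π p.1 p.2) K' := by
                conv_lhs => rw [← insert_erase hKp]
                rw [show (f p.1).erase (π p.1 p.2) = K' from hpβ]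
              have e2 : f q.1 = insert (π q.1 q.2) K' := by
                conv_lhs => rw [← insert_erase hKq]
                rw [show (f q.1).erase (π q.1 q.2) = K' from hqβ]
              rw [e1, e2, hpq]
            have hpq1 : p.1 = q.1 :=
              hfbij.injOn (Finset.mem_coe.mpr hp1) (Finset.mem_coe.mpr hq1) hfpq
            have hπinj := (hπ p.1 hp1).1
            rw [← hpq1] at hpq
            have hpq2 : p.2 = q.2 := by
              refine hπinj (Finset.mem_coe.mpr (mem_union_right _ hp2)) ?_ hpq
              rw [hpq1]
              exact Finset.mem_coe.mpr (mem_union_right _ hq2)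
            exact Prod.ext hpq1 hpq2
        rw [card_sdiff_of_subset hK'sub, hK'card] at hle
        omega
      have hΩle : Ω.card ≤ (Ω.image β).card * (B₁.card - k) := by
        rw [card_eq_sum_card_fiberwise (fun p hp => mem_image_of_mem β hp)]
        have hsum := Finset.sum_le_card_nsmul (Ω.image β)
          (fun K' => (Ω.filter (fun p => β p = K')).card) (B₁.card - k) hfiber
        simpa [smul_eq_mul] using hsum
      have himg : (Ω.image β).card ≤ (s.biUnion T).card := by
        apply card_le_card
        intro K' hK'
        obtain ⟨p, hp, rfl⟩ := mem_image.mp hK'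
        exact (hβmem p hp).1
      have hpos : 0 < B₁.card - k := by omega
      have hfinal : 𝓢.card * (B₁.card - k) ≤ (s.biUnion T).card * (B₁.card - k) := by
        calc 𝓢.card * (B₁.card - k) = Ω.card := hΩcard.symm
          _ ≤ (Ω.image β).card * (B₁.card - k) := hΩle
          _ ≤ (s.biUnion T).card * (B₁.card - k) := Nat.mul_le_mul_right _ himg
      have := Nat.le_of_mul_le_mul_right hfinal hpos
      omega
    obtain ⟨g, hginj, hg⟩ := (Finset.all_card_le_biUnion_card_iff_exists_injective T).mp hall
    have hgQ0 : ∀ z, g z ∈ B₂.powersetCard k := fun z => (mem_filter.mp (hg z)).1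
    have hgbas : ∀ z : {H' // H' ∈ B₁.powersetCard k},
        IsBasis 𝓘 ((B₂ \ g z) ∪ z.val) := fun z => (mem_filter.mp (hg z)).2
    set σ : Finset α → Finset α :=
      fun H => if hH : H ∈ B₁.powersetCard k then g ⟨H, hH⟩ else H with hσ
    have hσinj : Set.InjOn σ ↑(B₁.powersetCard k) := by
      intro H1 h1 H2 h2 heq
      rw [mem_coe] at h1 h2
      rw [hσ] at heq
      dsimp only at heq
      rw [dif_pos h1, dif_pos h2] at heq
      exact congrArg Subtype.val (hginj heq)
    have hmaps : ∀ H ∈ B₁.powersetCard k, σ H ∈ B₂.powersetCard k := by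
      intro H hH
      rw [hσ]
      dsimp only
      rw [dif_pos hH]
      exact hgQ0 _
    have himgeq : (B₁.powersetCard k).image σ = B₂.powersetCard k := by
      apply Finset.eq_of_subset_of_card_le
      · intro K' hK'
        obtain ⟨H, hH, rfl⟩ := mem_image.mp hK'
        exact hmaps H hH
      · rw [Finset.card_image_of_injOn hσinj, card_powersetCard, card_powersetCard, hc12]
    refine ⟨σ, ⟨?_, hσinj, ?_⟩, ?_⟩
    · intro H hH
      exact Finset.mem_coe.mpr (hmaps H (Finset.mem_coe.mp hH))
    · intro K' hK'
      rw [Finset.mem_coe, ← himgeq, mem_image] at hK'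
      obtain ⟨H, hH, rfl⟩ := hK'
      exact ⟨H, Finset.mem_coe.mpr hH, rfl⟩
    · intro H hH
      rw [hσ]
      dsimp only
      rw [dif_pos hH]
      exact hgbas ⟨H, hH⟩


end Greene

theorem basis_exchange_bijection {α : Type*} [DecidableEq α] [Fintype α]
    (𝓘 : Finset (Finset α)) (hM : IsMatroid 𝓘)
    (B₁ B₂ : Finset α) (hB₁ : IsBasis 𝓘 B₁) (hB₂ : IsBasis 𝓘 B₂)
    (h : ℕ) (hh1 : 1 ≤ h) (hh : h ≤ B₁.card) :
    ∃ σ : Finset α → Finset α,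
      Set.BijOn σ (B₁.powersetCard h : Set (Finset α)) (B₂.powersetCard h : Set (Finset α)) ∧
      ∀ H ∈ B₁.powersetCard h, IsBasis 𝓘 ((B₂ \ σ H) ∪ H) := by
  obtain ⟨σ, h1, h2⟩ := greene_aux hM hB₁ hB₂ (B₁.card - h) h (by omega)
  exact ⟨σ, h1, h2⟩
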